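/- (Discrete Myers theorem) If the Ollivier–Ricci curvature ric of a locally finite graph satisfies ric(x,y) ≥ ρ > 0 for all edges (x,y), then the graph is finite and its diameter is at most 2/ρ. -/

import Mathlib

open Classical Filter
noncomputable section

/-- A coupling (transference plan) between two measures on `V`, given as
nonnegative density functions. -/
def IsCoupling {V : Type*} (μ ν : V → ℝ) (ξ : V → V → ℝ) : Prop :=
  (∀ y y', 0 ≤ ξ y y') ∧ (∀ y, ∑' y', ξ y y' = μ y) ∧ (∀ y', ∑' y, ξ y y' = ν y')

/-- The 1-Wasserstein distance between `μ` and `ν` for the cost function `ρ`. -/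
def W1 {V : Type*} (ρ : V → V → ℝ) (μ ν : V → ℝ) : ℝ :=
  sInf {c | ∃ ξ, IsCoupling μ ν ξ ∧
    HasSum (fun p : V × V => ξ p.1 p.2 * ρ p.1 p.2) c}

/-- The shortest-path distance of a graph, as a real number. -/
def graphDist {V : Type*} (G : SimpleGraph V) (x y : V) : ℝ := G.dist x y

/-- The degree of a vertex. -/
def deg {V : Type*} (G : SimpleGraph V) (x : V) : ℕ := Nat.card {y | G.Adj x y}

/-- The Dirac measure at `x`. -/
def dirac {V : Type*} (x : V) : V → ℝ := fun y => if y = x then 1 else 0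

/-- The lazy random walk `μ_x^t = (1-t)·δ_x + t·(uniform measure on the neighbors of x)`. -/
def lazyWalk {V : Type*} (G : SimpleGraph V) (t : ℝ) (x y : V) : ℝ :=
  if y = x then 1 - t else if G.Adj x y then t / (deg G x) else 0

/-- The coarse Ricci curvature `κ^t(x,x') = 1 - W₁(μ_x^t, μ_{x'}^t)/d(x,x')`. -/
def kappa {V : Type*} (G : SimpleGraph V) (t : ℝ) (x x' : V) : ℝ :=
  1 - W1 (graphDist G) (lazyWalk G t x) (lazyWalk G t x') / graphDist G x x'

section MyersAux

variable {V : Type*} {G : SimpleGraph V}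

/-- A finitely supported probability density supported in `s`. -/
def FinMeas (μ : V → ℝ) (s : Finset V) : Prop :=
  (∀ a, 0 ≤ μ a) ∧ (∀ a ∉ s, μ a = 0) ∧ (∑ a ∈ s, μ a = 1)

lemma graphDist_nonneg (G : SimpleGraph V) (a b : V) : 0 ≤ graphDist G a b :=
  Nat.cast_nonneg _

lemma graphDist_self (G : SimpleGraph V) (a : V) : graphDist G a a = 0 := by
  simp [graphDist, SimpleGraph.dist_self]

lemma one_le_graphDist (hconn : G.Connected) {a b : V} (h : a ≠ b) : 1 ≤ graphDist G a b := by
  have := hconn.pos_dist_of_ne h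
  unfold graphDist
  exact_mod_cast this

lemma graphDist_triangle (hconn : G.Connected) (a b c : V) :
    graphDist G a c ≤ graphDist G a b + graphDist G b c := by
  unfold graphDist
  exact_mod_cast hconn.dist_triangle

lemma graphDist_comm (G : SimpleGraph V) (a b : V) : graphDist G a b = graphDist G b a := by
  unfold graphDist
  rw [SimpleGraph.dist_comm]

/-- Structural facts about couplings whose cost has a sum. -/
lemma coupling_marginals (hconn : G.Connected) {μ ν : V → ℝ} {ξ : V → V → ℝ} {c : ℝ}
    (hξ : IsCoupling μ ν ξ)
    (hc : HasSum (fun p : V × V => ξ p.1 p.2 * graphDist G p.1 p.2) c) :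
    (∀ a, HasSum (fun b => ξ a b) (μ a)) ∧ (∀ b, HasSum (fun a => ξ a b) (ν b)) := by
  obtain ⟨hpos, hrow, hcol⟩ := hξ
  have hfpos : ∀ p : V × V, 0 ≤ ξ p.1 p.2 * graphDist G p.1 p.2 :=
    fun p => mul_nonneg (hpos _ _) (graphDist_nonneg G _ _)
  have hg : Summable (fun p : V × V => if p.1 = p.2 then 0 else ξ p.1 p.2) := by
    refine Summable.of_nonneg_of_le (fun p => ?_) (fun p => ?_) hc.summable
    · by_cases h : p.1 = p.2 <;> simp [h, hpos]
    · by_cases h : p.1 = p.2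
      · simpa [h] using hfpos p
      · simp only [h, if_false]
        calc ξ p.1 p.2 = ξ p.1 p.2 * 1 := (mul_one _).symm
          _ ≤ ξ p.1 p.2 * graphDist G p.1 p.2 :=
            mul_le_mul_of_nonneg_left (one_le_graphDist hconn h) (hpos _ _)
  constructor
  · intro a
    have h1 : Summable (fun b => if a = b then 0 else ξ a b) :=
      hg.comp_injective (i := fun b => ((a, b) : V × V))
        (fun b b' h => by simpa using congrArg Prod.snd h)
    have h2 : Summable (fun b => if a = b then ξ a b else 0) := by
      apply summable_of_ne_finset_zero (s := {a})
      intro b hb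
      simp only [Finset.mem_singleton] at hb
      simp [Ne.symm hb]
    have h3 : Summable (fun b => ξ a b) := by
      have := h1.add h2
      refine this.congr fun b => ?_
      by_cases h : a = b <;> simp [h]
    have := h3.hasSum
    rwa [hrow a] at this
  · intro b
    have h1 : Summable (fun a => if a = b then 0 else ξ a b) :=
      hg.comp_injective (i := fun a => ((a, b) : V × V))
        (fun a a' h => by simpa using congrArg Prod.fst h)
    have h2 : Summable (fun a => if a = b then ξ a b else 0) := by
      apply summable_of_ne_finset_zero (s := {b})
      intro a ha
      simp only [Finset.mem_singleton] at ha
      simp [ha]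
    have h3 : Summable (fun a => ξ a b) := by
      have := h1.add h2
      refine this.congr fun a => ?_
      by_cases h : a = b <;> simp [h]
    have := h3.hasSum
    rwa [hcol b] at this

/-- Full package of finitary facts about a coupling between finitely
supported measures. -/
lemma coupling_props (hconn : G.Connected) {μ ν : V → ℝ} {s tt : Finset V}
    (hμ : FinMeas μ s) (hν : FinMeas ν tt) {ξ : V → V → ℝ} {c : ℝ}
    (hξ : IsCoupling μ ν ξ)
    (hc : HasSum (fun p : V × V => ξ p.1 p.2 * graphDist G p.1 p.2) c) :
    (∀ a b, μ a = 0 → ξ a b = 0) ∧ (∀ a b, ν b = 0 → ξ a b = 0) ∧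
    (∀ a, ∑ b ∈ tt, ξ a b = μ a) ∧ (∀ b, ∑ a ∈ s, ξ a b = ν b) ∧
    c = ∑ p ∈ s ×ˢ tt, ξ p.1 p.2 * graphDist G p.1 p.2 := by
  obtain ⟨hrowS, hcolS⟩ := coupling_marginals hconn hξ hc
  have hpos := hξ.1
  have hle1 : ∀ a b, ξ a b ≤ μ a := fun a b =>
    le_hasSum (hrowS a) b (fun j _ => hpos a j)
  have hle2 : ∀ a b, ξ a b ≤ ν b := fun a b =>
    le_hasSum (hcolS b) a (fun j _ => hpos j b)
  have hz1 : ∀ a b, μ a = 0 → ξ a b = 0 := fun a b h =>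
    le_antisymm (h ▸ hle1 a b) (hpos a b)
  have hz2 : ∀ a b, ν b = 0 → ξ a b = 0 := fun a b h =>
    le_antisymm (h ▸ hle2 a b) (hpos a b)
  refine ⟨hz1, hz2, ?_, ?_, ?_⟩
  · intro a
    have hz : ∀ b ∉ tt, ξ a b = 0 := fun b hb => hz2 a b (hν.2.1 b hb)
    exact ((hasSum_sum_of_ne_finset_zero hz).unique (hrowS a)).symm ▸
      ((hasSum_sum_of_ne_finset_zero hz).unique (hrowS a))
  · intro b
    have hz : ∀ a ∉ s, ξ a b = 0 := fun a ha => hz1 a b (hμ.2.1 a ha)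
    exact (hasSum_sum_of_ne_finset_zero hz).unique (hcolS b)
  · have hz : ∀ p ∉ s ×ˢ tt, ξ p.1 p.2 * graphDist G p.1 p.2 = 0 := by
      intro p hp
      rw [Finset.mem_product] at hp
      push_neg at hp
      by_cases h1 : p.1 ∈ s
      · have := hz2 p.1 p.2 (hν.2.1 p.2 (hp h1))
        simp [this]
      · have := hz1 p.1 p.2 (hμ.2.1 p.1 h1)
        simp [this]
    exact hc.unique (hasSum_sum_of_ne_finset_zero hz)

/-- The neighbors of `x` as a finset. -/
def nbr (hfin : ∀ v, (G.neighborSet v).Finite) (x : V) : Finset V := (hfin x).toFinset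

lemma mem_nbr (hfin : ∀ v, (G.neighborSet v).Finite) {x y : V} :
    y ∈ nbr hfin x ↔ G.Adj x y := by
  simp [nbr, Set.Finite.mem_toFinset, SimpleGraph.mem_neighborSet]

lemma deg_eq (hfin : ∀ v, (G.neighborSet v).Finite) (x : V) :
    deg G x = (nbr hfin x).card := by
  unfold deg nbr
  rw [Nat.card_coe_set_eq]
  have : {y | G.Adj x y} = G.neighborSet x := rfl
  rw [this, Set.ncard_eq_toFinset_card _ (hfin x)]

lemma deg_pos (hfin : ∀ v, (G.neighborSet v).Finite) {x : V} (hx : ∃ w, G.Adj x w) :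
    0 < deg G x := by
  rw [deg_eq hfin]
  obtain ⟨w, hw⟩ := hx
  exact Finset.card_pos.mpr ⟨w, (mem_nbr hfin).mpr hw⟩

lemma lazyWalk_nonneg {t : ℝ} (ht0 : 0 ≤ t) (ht1 : t ≤ 1) (x a : V) :
    0 ≤ lazyWalk G t x a := by
  unfold lazyWalk
  split
  · linarith
  · split
    · positivity
    · exact le_refl 0

lemma lazyWalk_zero (hfin : ∀ v, (G.neighborSet v).Finite) {t : ℝ} {x a : V}
    (ha : a ∉ insert x (nbr hfin x)) : lazyWalk G t x a = 0 := by
  simp only [Finset.mem_insert, not_or] at ha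
  unfold lazyWalk
  rw [if_neg ha.1, if_neg (fun h => ha.2 ((mem_nbr hfin).mpr h))]

lemma lazyWalk_finMeas (hfin : ∀ v, (G.neighborSet v).Finite) {t : ℝ}
    (ht0 : 0 ≤ t) (ht1 : t ≤ 1) {x : V} (hx : ∃ w, G.Adj x w) :
    FinMeas (lazyWalk G t x) (insert x (nbr hfin x)) := by
  refine ⟨lazyWalk_nonneg ht0 ht1 x, fun a ha => lazyWalk_zero hfin ha, ?_⟩
  have hxn : x ∉ nbr hfin x := fun h => G.irrefl ((mem_nbr hfin).mp h)
  rw [Finset.sum_insert hxn]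
  have h1 : lazyWalk G t x x = 1 - t := by unfold lazyWalk; simp
  have h2 : ∑ a ∈ nbr hfin x, lazyWalk G t x a = t := by
    have hd : (0:ℝ) < deg G x := by exact_mod_cast deg_pos hfin hx
    have : ∀ a ∈ nbr hfin x, lazyWalk G t x a = t / deg G x := by
      intro a ha
      have hadj : G.Adj x a := (mem_nbr hfin).mp ha
      unfold lazyWalk
      rw [if_neg hadj.ne', if_pos hadj]
    rw [Finset.sum_congr rfl this, Finset.sum_const, ← deg_eq hfin, nsmul_eq_mul]
    field_simp
  rw [h1, h2]
  ring

lemma lazyWalk_dist_sum (hfin : ∀ v, (G.neighborSet v).Finite) {t : ℝ}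
    {x : V} (hx : ∃ w, G.Adj x w) :
    ∑ a ∈ insert x (nbr hfin x), lazyWalk G t x a * graphDist G x a = t := by
  have hxn : x ∉ nbr hfin x := fun h => G.irrefl ((mem_nbr hfin).mp h)
  rw [Finset.sum_insert hxn]
  have h1 : lazyWalk G t x x * graphDist G x x = 0 := by
    rw [graphDist_self, mul_zero]
  have h2 : ∑ a ∈ nbr hfin x, lazyWalk G t x a * graphDist G x a = t := by
    have hd : (0:ℝ) < deg G x := by exact_mod_cast deg_pos hfin hx
    have : ∀ a ∈ nbr hfin x, lazyWalk G t x a * graphDist G x a = t / deg G x := by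
      intro a ha
      have hadj : G.Adj x a := (mem_nbr hfin).mp ha
      have hda : graphDist G x a = 1 := by
        unfold graphDist
        rw [SimpleGraph.dist_eq_one_iff_adj.mpr hadj]
        norm_num
      unfold lazyWalk
      rw [if_neg hadj.ne', if_pos hadj, hda, mul_one]
    rw [Finset.sum_congr rfl this, Finset.sum_const, ← deg_eq hfin, nsmul_eq_mul]
    field_simp
  rw [h1, h2]
  ring

/-- Lower bound `d(x,y) - 2t` for the cost of any coupling of lazy walks. -/
lemma cost_lower (hconn : G.Connected) (hfin : ∀ v, (G.neighborSet v).Finite)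
    {t : ℝ} (ht0 : 0 ≤ t) (ht1 : t ≤ 1) {x y : V}
    (hx : ∃ w, G.Adj x w) (hy : ∃ w, G.Adj y w)
    {ξ : V → V → ℝ} {c : ℝ}
    (hξ : IsCoupling (lazyWalk G t x) (lazyWalk G t y) ξ)
    (hc : HasSum (fun p : V × V => ξ p.1 p.2 * graphDist G p.1 p.2) c) :
    graphDist G x y - 2 * t ≤ c := by
  set s := insert x (nbr hfin x) with hs
  set tt := insert y (nbr hfin y) with htt
  have hμ := lazyWalk_finMeas hfin ht0 ht1 hx
  have hν := lazyWalk_finMeas hfin ht0 ht1 hy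
  obtain ⟨hz1, hz2, hmrow, hmcol, hceq⟩ := coupling_props hconn hμ hν hξ hc
  have hpos := hξ.1
  -- the three sums
  have hsum1 : ∑ p ∈ s ×ˢ tt, ξ p.1 p.2 = 1 := by
    rw [Finset.sum_product]
    calc ∑ a ∈ s, ∑ b ∈ tt, ξ a b = ∑ a ∈ s, lazyWalk G t x a :=
          Finset.sum_congr rfl (fun a _ => hmrow a)
      _ = 1 := hμ.2.2
  have hsum2 : ∑ p ∈ s ×ˢ tt, ξ p.1 p.2 * graphDist G x p.1 = t := by
    rw [Finset.sum_product]
    calc ∑ a ∈ s, ∑ b ∈ tt, ξ a b * graphDist G x a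
        = ∑ a ∈ s, (∑ b ∈ tt, ξ a b) * graphDist G x a := by
          refine Finset.sum_congr rfl (fun a _ => ?_)
          rw [Finset.sum_mul]
      _ = ∑ a ∈ s, lazyWalk G t x a * graphDist G x a :=
          Finset.sum_congr rfl (fun a _ => by rw [hmrow a])
      _ = t := lazyWalk_dist_sum hfin hx
  have hsum3 : ∑ p ∈ s ×ˢ tt, ξ p.1 p.2 * graphDist G p.2 y = t := by
    rw [Finset.sum_product_right]
    calc ∑ b ∈ tt, ∑ a ∈ s, ξ a b * graphDist G b y
        = ∑ b ∈ tt, (∑ a ∈ s, ξ a b) * graphDist G b y := by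
          refine Finset.sum_congr rfl (fun b _ => ?_)
          rw [Finset.sum_mul]
      _ = ∑ b ∈ tt, lazyWalk G t y b * graphDist G y b :=
          Finset.sum_congr rfl (fun b _ => by rw [hmcol b, graphDist_comm])
      _ = t := lazyWalk_dist_sum hfin hy
  have hkey : ∀ p ∈ s ×ˢ tt,
      ξ p.1 p.2 * graphDist G x y - ξ p.1 p.2 * graphDist G x p.1
        - ξ p.1 p.2 * graphDist G p.2 y ≤ ξ p.1 p.2 * graphDist G p.1 p.2 := by
    intro p _
    have h1 : graphDist G x y ≤ graphDist G x p.1 + graphDist G p.1 p.2 + graphDist G p.2 y := by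
      calc graphDist G x y ≤ graphDist G x p.1 + graphDist G p.1 y :=
            graphDist_triangle hconn x p.1 y
        _ ≤ graphDist G x p.1 + (graphDist G p.1 p.2 + graphDist G p.2 y) := by
            have := graphDist_triangle hconn p.1 p.2 y
            linarith
        _ = _ := by ring
    nlinarith [hpos p.1 p.2]
  have hlhs : ∑ p ∈ s ×ˢ tt,
      (ξ p.1 p.2 * graphDist G x y - ξ p.1 p.2 * graphDist G x p.1
        - ξ p.1 p.2 * graphDist G p.2 y) = graphDist G x y - 2 * t := by
    rw [Finset.sum_sub_distrib, Finset.sum_sub_distrib, ← Finset.sum_mul, hsum1, one_mul,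
      hsum2, hsum3]
    ring
  calc graphDist G x y - 2 * t
      = ∑ p ∈ s ×ˢ tt, (ξ p.1 p.2 * graphDist G x y - ξ p.1 p.2 * graphDist G x p.1
          - ξ p.1 p.2 * graphDist G p.2 y) := hlhs.symm
    _ ≤ ∑ p ∈ s ×ˢ tt, ξ p.1 p.2 * graphDist G p.1 p.2 := Finset.sum_le_sum hkey
    _ = c := hceq.symm

/-- The product coupling shows the set of coupling costs is nonempty. -/
lemma exists_coupling {μ ν : V → ℝ} {s tt : Finset V}
    (hμ : FinMeas μ s) (hν : FinMeas ν tt) :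
    ∃ ξ c, IsCoupling μ ν ξ ∧
      HasSum (fun p : V × V => ξ p.1 p.2 * graphDist G p.1 p.2) c := by
  refine ⟨fun a b => μ a * ν b, _, ⟨⟨fun a b => mul_nonneg (hμ.1 a) (hν.1 b), ?_, ?_⟩,
    (hasSum_sum_of_ne_finset_zero (s := s ×ˢ tt) ?_)⟩⟩
  · intro a
    rw [tsum_mul_left, tsum_eq_sum (s := tt) (fun b hb => hν.2.1 b hb), hν.2.2, mul_one]
  · intro b
    rw [tsum_mul_right, tsum_eq_sum (s := s) (fun a ha => hμ.2.1 a ha), hμ.2.2, one_mul]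
  · intro p hp
    rw [Finset.mem_product] at hp
    push_neg at hp
    by_cases h1 : p.1 ∈ s
    · simp only []
      rw [hν.2.1 p.2 (hp h1)]
      ring
    · simp only []
      rw [hμ.2.1 p.1 h1]
      ring

lemma cost_set_bddBelow (μ ν : V → ℝ) :
    BddBelow {c | ∃ ξ, IsCoupling μ ν ξ ∧
      HasSum (fun p : V × V => ξ p.1 p.2 * graphDist G p.1 p.2) c} := by
  refine ⟨0, fun c hc => ?_⟩
  obtain ⟨ξ, hξ, hs⟩ := hc
  rw [← hs.tsum_eq]
  exact tsum_nonneg (fun p => mul_nonneg (hξ.1 _ _) (graphDist_nonneg G _ _))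

lemma exists_coupling_lt {μ ν : V → ℝ} {s tt : Finset V}
    (hμ : FinMeas μ s) (hν : FinMeas ν tt) {K : ℝ}
    (h : W1 (graphDist G) μ ν < K) :
    ∃ ξ c, IsCoupling μ ν ξ ∧
      HasSum (fun p : V × V => ξ p.1 p.2 * graphDist G p.1 p.2) c ∧ c < K := by
  obtain ⟨ξ0, c0, h0⟩ := exists_coupling (G := G) hμ hν
  have hne : {c | ∃ ξ, IsCoupling μ ν ξ ∧
      HasSum (fun p : V × V => ξ p.1 p.2 * graphDist G p.1 p.2) c}.Nonempty :=
    ⟨c0, ξ0, h0⟩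
  obtain ⟨c, hcmem, hlt⟩ := exists_lt_of_csInf_lt hne h
  obtain ⟨ξ, hξ, hs⟩ := hcmem
  exact ⟨ξ, c, hξ, hs, hlt⟩

/-- The identity coupling of a measure with itself, with zero cost. -/
lemma id_coupling {μ : V → ℝ} {s : Finset V} (hμ : FinMeas μ s) :
    ∃ ξ, IsCoupling μ μ ξ ∧
      HasSum (fun p : V × V => ξ p.1 p.2 * graphDist G p.1 p.2) 0 := by
  refine ⟨fun a b => if b = a then μ a else 0, ⟨fun a b => ?_, fun a => ?_, fun b => ?_⟩, ?_⟩
  · simp only []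
    split
    · exact hμ.1 a
    · exact le_refl 0
  · exact tsum_ite_eq a (fun _ => μ a)
  · have : (fun a => if b = a then μ a else 0) = fun a => if a = b then μ b else 0 := by
      funext a
      by_cases h : a = b
      · subst h; simp
      · simp [h, Ne.symm h]
    rw [this]
    exact tsum_ite_eq b (fun _ => μ b)
  · have : (fun p : V × V => (if p.2 = p.1 then μ p.1 else 0) * graphDist G p.1 p.2)
        = fun _ => 0 := by
      funext p
      by_cases h : p.2 = p.1
      · rw [if_pos h, h, graphDist_self, mul_zero]
      · rw [if_neg h, zero_mul]
    rw [this]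
    exact hasSum_zero

/-- Gluing two couplings along a common middle measure: triangle inequality. -/
lemma glue_coupling (hconn : G.Connected) {μ ν σ : V → ℝ} {s tt u : Finset V}
    (hμ : FinMeas μ s) (hν : FinMeas ν tt) (hσ : FinMeas σ u)
    {ξ1 ξ2 : V → V → ℝ} {c1 c2 : ℝ}
    (h1 : IsCoupling μ ν ξ1)
    (hc1 : HasSum (fun p : V × V => ξ1 p.1 p.2 * graphDist G p.1 p.2) c1)
    (h2 : IsCoupling ν σ ξ2)
    (hc2 : HasSum (fun p : V × V => ξ2 p.1 p.2 * graphDist G p.1 p.2) c2) :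
    ∃ ξ c, IsCoupling μ σ ξ ∧
      HasSum (fun p : V × V => ξ p.1 p.2 * graphDist G p.1 p.2) c ∧ c ≤ c1 + c2 := by
  obtain ⟨z1μ, z1ν, m1row, m1col, e1⟩ := coupling_props hconn hμ hν h1 hc1
  obtain ⟨z2ν, z2σ, m2row, m2col, e2⟩ := coupling_props hconn hν hσ h2 hc2
  have p1 := h1.1
  have p2 := h2.1
  set η : V → V → ℝ := fun a c => ∑ b ∈ tt, ξ1 a b * ξ2 b c / ν b with hηdef
  have hηpos : ∀ a c, 0 ≤ η a c := fun a c =>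
    Finset.sum_nonneg fun b _ => div_nonneg (mul_nonneg (p1 a b) (p2 b c)) (hν.1 b)
  have hηzr : ∀ a c, c ∉ u → η a c = 0 := by
    intro a c hc
    refine Finset.sum_eq_zero fun b _ => ?_
    rw [z2σ b c (hσ.2.1 c hc)]
    ring
  have hηzl : ∀ a c, a ∉ s → η a c = 0 := by
    intro a c ha
    refine Finset.sum_eq_zero fun b _ => ?_
    rw [z1μ a b (hμ.2.1 a ha)]
    ring
  -- row sums of η over u
  have hrow : ∀ a, ∑ c ∈ u, η a c = μ a := by
    intro a
    have : ∑ c ∈ u, η a c = ∑ b ∈ tt, ∑ c ∈ u, ξ1 a b * ξ2 b c / ν b :=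
      Finset.sum_comm
    rw [this, ← m1row a]
    refine Finset.sum_congr rfl fun b _ => ?_
    have hfac : ∀ c, ξ1 a b * ξ2 b c / ν b = (ξ1 a b / ν b) * ξ2 b c := fun c => by ring
    rw [Finset.sum_congr rfl (fun c _ => hfac c), ← Finset.mul_sum, m2row b]
    by_cases hb : ν b = 0
    · rw [z1ν a b hb, hb]
      ring
    · field_simp
  -- column sums of η over s
  have hcolsum : ∀ c, ∑ a ∈ s, η a c = σ c := by
    intro c
    have : ∑ a ∈ s, η a c = ∑ b ∈ tt, ∑ a ∈ s, ξ1 a b * ξ2 b c / ν b :=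
      Finset.sum_comm
    rw [this, ← m2col c]
    refine Finset.sum_congr rfl fun b _ => ?_
    have hfac : ∀ a, ξ1 a b * ξ2 b c / ν b = ξ1 a b * (ξ2 b c / ν b) := fun a => by ring
    rw [Finset.sum_congr rfl (fun a _ => hfac a), ← Finset.sum_mul, m1col b]
    by_cases hb : ν b = 0
    · rw [z2ν b c hb, hb]
      ring
    · field_simp
  have hcoup : IsCoupling μ σ η := by
    refine ⟨hηpos, fun a => ?_, fun c => ?_⟩
    · rw [tsum_eq_sum (s := u) (fun c hc => hηzr a c hc)]
      exact hrow a
    · rw [tsum_eq_sum (s := s) (fun a ha => hηzl a c ha)]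
      exact hcolsum c
  -- cost of η
  have hczero : ∀ p : V × V, p ∉ s ×ˢ u → η p.1 p.2 * graphDist G p.1 p.2 = 0 := by
    intro p hp
    rw [Finset.mem_product] at hp
    push_neg at hp
    by_cases hps : p.1 ∈ s
    · rw [hηzr p.1 p.2 (hp hps), zero_mul]
    · rw [hηzl p.1 p.2 hps, zero_mul]
  have hcost : HasSum (fun p : V × V => η p.1 p.2 * graphDist G p.1 p.2)
      (∑ p ∈ s ×ˢ u, η p.1 p.2 * graphDist G p.1 p.2) :=
    hasSum_sum_of_ne_finset_zero hczero
  refine ⟨η, _, hcoup, hcost, ?_⟩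
  -- the cost bound
  have e1' : c1 = ∑ a ∈ s, ∑ b ∈ tt, ξ1 a b * graphDist G a b := by
    rw [e1, Finset.sum_product]
  have e2' : c2 = ∑ b ∈ tt, ∑ c ∈ u, ξ2 b c * graphDist G b c := by
    rw [e2, Finset.sum_product]
  have hS1 : ∑ a ∈ s, ∑ c ∈ u, ∑ b ∈ tt, ξ1 a b * ξ2 b c / ν b * graphDist G a b = c1 := by
    rw [e1']
    refine Finset.sum_congr rfl fun a _ => ?_
    rw [Finset.sum_comm]
    refine Finset.sum_congr rfl fun b _ => ?_
    have hfac : ∀ c, ξ1 a b * ξ2 b c / ν b * graphDist G a b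
        = (ξ1 a b * graphDist G a b / ν b) * ξ2 b c := fun c => by ring
    rw [Finset.sum_congr rfl (fun c _ => hfac c), ← Finset.mul_sum, m2row b]
    by_cases hb : ν b = 0
    · rw [z1ν a b hb, hb]
      ring
    · field_simp
  have hS2 : ∑ a ∈ s, ∑ c ∈ u, ∑ b ∈ tt, ξ1 a b * ξ2 b c / ν b * graphDist G b c = c2 := by
    rw [Finset.sum_comm, e2']
    have swap : ∀ c ∈ u, ∑ a ∈ s, ∑ b ∈ tt, ξ1 a b * ξ2 b c / ν b * graphDist G b c
        = ∑ b ∈ tt, ∑ a ∈ s, ξ1 a b * ξ2 b c / ν b * graphDist G b c :=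
      fun c _ => Finset.sum_comm
    rw [Finset.sum_congr rfl swap, Finset.sum_comm]
    refine Finset.sum_congr rfl fun b _ => ?_
    refine Finset.sum_congr rfl fun c _ => ?_
    have hfac : ∀ a, ξ1 a b * ξ2 b c / ν b * graphDist G b c
        = ξ1 a b * (ξ2 b c / ν b * graphDist G b c) := fun a => by ring
    rw [Finset.sum_congr rfl (fun a _ => hfac a), ← Finset.sum_mul, m1col b]
    by_cases hb : ν b = 0
    · rw [z2ν b c hb, hb]
      ring
    · field_simp
  calc ∑ p ∈ s ×ˢ u, η p.1 p.2 * graphDist G p.1 p.2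
      = ∑ a ∈ s, ∑ c ∈ u, η a c * graphDist G a c := by rw [Finset.sum_product]
    _ = ∑ a ∈ s, ∑ c ∈ u, ∑ b ∈ tt, ξ1 a b * ξ2 b c / ν b * graphDist G a c := by
        refine Finset.sum_congr rfl fun a _ => Finset.sum_congr rfl fun c _ => ?_
        rw [hηdef, Finset.sum_mul]
    _ ≤ ∑ a ∈ s, ∑ c ∈ u, ∑ b ∈ tt,
          ξ1 a b * ξ2 b c / ν b * (graphDist G a b + graphDist G b c) := by
        refine Finset.sum_le_sum fun a _ => Finset.sum_le_sum fun c _ =>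
          Finset.sum_le_sum fun b _ => ?_
        refine mul_le_mul_of_nonneg_left (graphDist_triangle hconn a b c)
          (div_nonneg (mul_nonneg (p1 a b) (p2 b c)) (hν.1 b))
    _ = (∑ a ∈ s, ∑ c ∈ u, ∑ b ∈ tt, ξ1 a b * ξ2 b c / ν b * graphDist G a b)
        + ∑ a ∈ s, ∑ c ∈ u, ∑ b ∈ tt, ξ1 a b * ξ2 b c / ν b * graphDist G b c := by
        rw [← Finset.sum_add_distrib]
        refine Finset.sum_congr rfl fun a _ => ?_
        rw [← Finset.sum_add_distrib]
        refine Finset.sum_congr rfl fun c _ => ?_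
        rw [← Finset.sum_add_distrib]
        refine Finset.sum_congr rfl fun b _ => ?_
        ring
    _ = c1 + c2 := by rw [hS1, hS2]

/-- Chaining couplings along a walk whose edges all have small Wasserstein cost. -/
lemma chain_coupling (hconn : G.Connected) (hfin : ∀ v, (G.neighborSet v).Finite)
    (hdeg : ∀ v : V, ∃ w, G.Adj v w) {t : ℝ} (ht0 : 0 ≤ t) (ht1 : t ≤ 1) {K : ℝ}
    {x y : V} (p : G.Walk x y)
    (hK : ∀ d ∈ p.darts, W1 (graphDist G)
      (lazyWalk G t d.toProd.1) (lazyWalk G t d.toProd.2) < K) :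
    ∃ ξ c, IsCoupling (lazyWalk G t x) (lazyWalk G t y) ξ ∧
      HasSum (fun pr : V × V => ξ pr.1 pr.2 * graphDist G pr.1 pr.2) c ∧
      c ≤ p.length * K := by
  induction p with
  | nil =>
    obtain ⟨ξ, hξ, hs⟩ := id_coupling (G := G) (lazyWalk_finMeas hfin ht0 ht1 (hdeg _))
    exact ⟨ξ, 0, hξ, hs, by simp⟩
  | @cons a b y h q ih =>
    have hd1 : (⟨(a, b), h⟩ : G.Dart) ∈ (SimpleGraph.Walk.cons h q).darts := by
      rw [SimpleGraph.Walk.darts_cons]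
      exact List.mem_cons_self
    obtain ⟨ξ1, c1, hξ1, hs1, hlt1⟩ :=
      exists_coupling_lt (lazyWalk_finMeas hfin ht0 ht1 (hdeg a))
        (lazyWalk_finMeas hfin ht0 ht1 (hdeg b)) (hK _ hd1)
    obtain ⟨ξ2, c2, hξ2, hs2, hle2⟩ := ih (fun d hd => hK d (by
      rw [SimpleGraph.Walk.darts_cons]
      exact List.mem_cons_of_mem _ hd))
    obtain ⟨ξ, c, hξ, hs, hle⟩ := glue_coupling hconn
      (lazyWalk_finMeas hfin ht0 ht1 (hdeg a))
      (lazyWalk_finMeas hfin ht0 ht1 (hdeg b))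
      (lazyWalk_finMeas hfin ht0 ht1 (hdeg y)) hξ1 hs1 hξ2 hs2
    refine ⟨ξ, c, hξ, hs, ?_⟩
    rw [SimpleGraph.Walk.length_cons]
    push_cast
    have := hlt1.le
    calc c ≤ c1 + c2 := hle
      _ ≤ K + q.length * K := add_le_add this hle2
      _ = (q.length + 1) * K := by ring

/-- Balls in a connected locally finite graph are finite. -/
lemma ball_finite (hconn : G.Connected) (hfin : ∀ v, (G.neighborSet v).Finite)
    (x0 : V) : ∀ m : ℕ, {v : V | G.dist x0 v ≤ m}.Finite := by
  intro m
  induction m with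
  | zero =>
    refine (Set.finite_singleton x0).subset fun v hv => ?_
    simp only [Set.mem_setOf_eq, Nat.le_zero] at hv
    have := (hconn.dist_eq_zero_iff).mp hv
    simp [this.symm]
  | succ m ih =>
    have step : ∀ v : V, G.dist x0 v = m + 1 → ∃ u, G.dist x0 u ≤ m ∧ G.Adj u v := by
      intro v hv
      obtain ⟨q, hq⟩ := (hconn v x0).exists_walk_length_eq_dist
      rw [SimpleGraph.dist_comm, hv] at hq
      revert hq
      rcases q with _ | ⟨h, q'⟩
      · intro hq
        simp at hq
      · intro hq
        rw [SimpleGraph.Walk.length_cons] at hq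
        refine ⟨_, ?_, h.symm⟩
        rw [SimpleGraph.dist_comm]
        calc G.dist _ x0 ≤ q'.length := SimpleGraph.dist_le q'
          _ = m := by omega
    have hsub : {v : V | G.dist x0 v ≤ m + 1} ⊆
        {v : V | G.dist x0 v ≤ m} ∪ ⋃ u ∈ {v : V | G.dist x0 v ≤ m}, G.neighborSet u := by
      intro v hv
      simp only [Set.mem_setOf_eq] at hv
      by_cases h : G.dist x0 v ≤ m
      · exact Or.inl h
      · have heq : G.dist x0 v = m + 1 := le_antisymm hv (by omega)
        obtain ⟨u, hu, hadj⟩ := step v heq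
        refine Or.inr ?_
        simp only [Set.mem_iUnion]
        exact ⟨u, hu, hadj⟩
    exact (ih.union (ih.biUnion fun u _ => hfin u)).subset hsub

end MyersAux

/-- discrete Myers theorem: if the Ollivier–Ricci curvature of
every edge is at least `ρ > 0`, then the graph is finite and its diameter is at
most `2/ρ`. -/
theorem discrete_myers {V : Type*} (G : SimpleGraph V) (hconn : G.Connected)
    (hfin : ∀ v, (G.neighborSet v).Finite) (ρ : ℝ) (hρ : 0 < ρ)
    (ric : V → V → ℝ)
    (hric : ∀ x y, G.Adj x y → Filter.Tendsto (fun t => kappa G t x y / t)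
      (nhdsWithin 0 (Set.Ioi 0)) (nhds (ric x y)))
    (hlow : ∀ x y, G.Adj x y → ρ ≤ ric x y) :
    Finite V ∧ ∀ x y : V, (G.dist x y : ℝ) ≤ 2 / ρ := by
  by_cases hsub : ∀ a b : V, a = b
  · have hss : Subsingleton V := ⟨hsub⟩
    refine ⟨Finite.of_subsingleton, fun x y => ?_⟩
    rw [hsub x y, SimpleGraph.dist_self]
    push_cast
    positivity
  · push_neg at hsub
    obtain ⟨a0, b0, hab⟩ := hsub
    have hdeg : ∀ v : V, ∃ w, G.Adj v w := by
      intro v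
      by_cases hva : v = b0
      · obtain ⟨p⟩ := hconn v a0
        cases p with
        | nil => exact absurd (hva.symm.trans rfl).symm hab
        | cons h _ => exact ⟨_, h⟩
      · obtain ⟨p⟩ := hconn v b0
        cases p with
        | nil => exact absurd rfl hva
        | cons h _ => exact ⟨_, h⟩
    have key : ∀ x y : V, ρ * G.dist x y ≤ 2 := by
      intro x y
      by_cases hxy : x = y
      · subst hxy
        rw [SimpleGraph.dist_self]
        push_cast
        linarith
      · have hn : 0 < G.dist x y := hconn.pos_dist_of_ne hxy
        have hn1 : (1:ℝ) ≤ (G.dist x y : ℝ) := by exact_mod_cast hn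
        refine le_of_forall_pos_le_add fun ε hε => ?_
        set n : ℕ := G.dist x y with hndef
        set ε' : ℝ := ε / n with hε'def
        have hε'pos : 0 < ε' := div_pos hε (by linarith)
        obtain ⟨p, hp⟩ := hconn.exists_walk_length_eq_dist x y
        have hev1 : ∀ᶠ t in nhdsWithin (0:ℝ) (Set.Ioi 0), t ≤ 1 :=
          ((eventually_lt_nhds one_pos).mono fun t ht => ht.le).filter_mono
            nhdsWithin_le_nhds
        have hev2 : ∀ᶠ t in nhdsWithin (0:ℝ) (Set.Ioi 0),
            ∀ d ∈ {d : G.Dart | d ∈ p.darts},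
              ρ - ε' < kappa G t d.toProd.1 d.toProd.2 / t := by
          rw [eventually_all_finite (p.darts.finite_toSet)]
          intro d hd
          have hadj : G.Adj d.toProd.1 d.toProd.2 := d.adj
          exact (hric _ _ hadj).eventually_const_lt
            (lt_of_lt_of_le (by linarith) (hlow _ _ hadj))
        obtain ⟨t, ht, htpos⟩ := ((hev1.and hev2).and self_mem_nhdsWithin).exists
        obtain ⟨ht1, hdart⟩ := ht
        have htpos' : (0:ℝ) < t := htpos
        set K : ℝ := 1 - (ρ - ε') * t with hKdef
        have hK : ∀ d ∈ p.darts, W1 (graphDist G)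
            (lazyWalk G t d.toProd.1) (lazyWalk G t d.toProd.2) < K := by
          intro d hd
          have h2 := hdart d hd
          have hadj : G.Adj d.toProd.1 d.toProd.2 := d.adj
          have hgd : graphDist G d.toProd.1 d.toProd.2 = 1 := by
            unfold graphDist
            rw [SimpleGraph.dist_eq_one_iff_adj.mpr hadj]
            norm_num
          have hk : kappa G t d.toProd.1 d.toProd.2
              = 1 - W1 (graphDist G) (lazyWalk G t d.toProd.1)
                  (lazyWalk G t d.toProd.2) := by
            unfold kappa
            rw [hgd, div_one]
          rw [hk] at h2
          have h3 := (lt_div_iff₀ htpos').mp h2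
          rw [hKdef]
          linarith
        obtain ⟨ξ, c, hξ, hs, hcle⟩ :=
          chain_coupling hconn hfin hdeg htpos'.le ht1 p hK
        have hlb := cost_lower hconn hfin htpos'.le ht1 (hdeg x) (hdeg y) hξ hs
        have hgd : graphDist G x y = (n:ℝ) := rfl
        rw [hgd] at hlb
        rw [hp] at hcle
        have h3 : (n:ℝ) * (ρ - ε') * t ≤ 2 * t := by
          rw [hKdef] at hcle
          nlinarith
        have h4 : (n:ℝ) * (ρ - ε') ≤ 2 := le_of_mul_le_mul_right (by linarith) htpos'
        have hne : (n:ℝ) ≠ 0 := by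
          rw [hndef]
          exact_mod_cast hn.ne'
        have h5 : ε' * n = ε := by
          rw [hε'def]
          field_simp
        nlinarith
    refine ⟨?_, fun x y => ?_⟩
    · have hM : ∀ v, G.dist a0 v ≤ ⌊2/ρ⌋₊ := by
        intro v
        refine Nat.le_floor ?_
        have := key a0 v
        rw [le_div_iff₀ hρ]
        linarith [key a0 v]
      exact Set.finite_univ_iff.mp
        ((ball_finite hconn hfin a0 ⌊2/ρ⌋₊).subset fun v _ => hM v)
    · rw [le_div_iff₀ hρ]
      linarith [key x y]
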